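/- (Daleskii–Krein theorem.) Let f : ℝ → ℝ be a C¹-function and let A = U Λ_α U* be a d×d Hermitian matrix with non-increasingly ordered eigenvalue vector α and unitary U. Then the scalar matrix function 𝓛_f (defined by applying f to each eigenvalue) is Fréchet differentiable at A, and for every Hermitian matrix E, setting Ê = U*EU, the Fréchet derivative is 𝓛_f'(E) = U( [f,α] ∘ Ê )U*, where ∘ is Hadamard multiplication and [f,α] is the matrix of divided differences [f,α](m,n) = (f(α_m)−f(α_n))/(α_m−α_n) when α_m ≠ α_n and [f,α](m,n) = f'(α_m) when α_m = α_n. -/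

import Mathlib

open Matrix Filter

attribute [local instance] Matrix.frobeniusNormedAddCommGroup Matrix.frobeniusNormedSpace

/-- The matrix `[f,α]` of divided differences of a scalar function `f`. -/
noncomputable def divDiff {d : ℕ} (f : ℝ → ℝ) (α : Fin d → ℝ) (m n : Fin d) : ℝ :=
  if α m = α n then deriv f (α m)
  else (f (α m) - f (α n)) / (α m - α n)

section Auxiliary

attribute [local instance] Matrix.frobeniusNormedRing Matrix.frobeniusNormedAlgebra

open Finset

variable {d : ℕ}

/-! ### Frobenius norm toolkit -/

lemma frob_norm_eq (X : Matrix (Fin d) (Fin d) ℂ) :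
    ‖X‖ = Real.sqrt (∑ i, ∑ j, ‖X i j‖ ^ 2) := by
  rw [Matrix.frobenius_norm_def, Real.sqrt_eq_rpow]
  norm_num

lemma frob_le_of_entry_le {X Y : Matrix (Fin d) (Fin d) ℂ} {L : ℝ} (hL : 0 ≤ L)
    (h : ∀ i j, ‖X i j‖ ≤ L * ‖Y i j‖) : ‖X‖ ≤ L * ‖Y‖ := by
  rw [frob_norm_eq, frob_norm_eq, ← Real.sqrt_sq hL, ← Real.sqrt_mul (sq_nonneg L)]
  apply Real.sqrt_le_sqrt
  rw [Finset.mul_sum]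
  refine Finset.sum_le_sum fun i _ => ?_
  rw [Finset.mul_sum]
  refine Finset.sum_le_sum fun j _ => ?_
  calc ‖X i j‖ ^ 2 ≤ (L * ‖Y i j‖) ^ 2 := by
        exact pow_le_pow_left₀ (norm_nonneg _) (h i j) 2
    _ = L ^ 2 * ‖Y i j‖ ^ 2 := by ring

lemma entry_le_frob (X : Matrix (Fin d) (Fin d) ℂ) (i j : Fin d) : ‖X i j‖ ≤ ‖X‖ := by
  rw [frob_norm_eq]
  have h1 : ‖X i j‖ ^ 2 ≤ ∑ i', ∑ j', ‖X i' j'‖ ^ 2 := by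
    calc ‖X i j‖ ^ 2 ≤ ∑ j', ‖X i j'‖ ^ 2 :=
          Finset.single_le_sum (f := fun j' => ‖X i j'‖ ^ 2)
            (fun k _ => sq_nonneg _) (Finset.mem_univ j)
      _ ≤ ∑ i', ∑ j', ‖X i' j'‖ ^ 2 :=
          Finset.single_le_sum (f := fun i' => ∑ j', ‖X i' j'‖ ^ 2)
            (fun k _ => Finset.sum_nonneg fun _ _ => sq_nonneg _) (Finset.mem_univ i)
  calc ‖X i j‖ = Real.sqrt (‖X i j‖ ^ 2) := (Real.sqrt_sq (norm_nonneg _)).symm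
    _ ≤ _ := Real.sqrt_le_sqrt h1

lemma frob_sq_eq_trace (X : Matrix (Fin d) (Fin d) ℂ) :
    (∑ i, ∑ j, ‖X i j‖ ^ 2) = (Matrix.trace (Xᴴ * X)).re := by
  rw [Matrix.trace]
  simp only [Matrix.diag_apply, Matrix.mul_apply, Matrix.conjTranspose_apply]
  rw [Complex.re_sum, Finset.sum_comm]
  refine Finset.sum_congr rfl fun i _ => ?_
  rw [Complex.re_sum]
  refine Finset.sum_congr rfl fun j _ => ?_
  have : (star (X j i) * X j i) = ((Complex.normSq (X j i) : ℝ) : ℂ) := by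
    rw [← Complex.mul_conj (X j i), mul_comm]; rfl
  rw [this, Complex.ofReal_re, ← Complex.sq_norm]

lemma frob_unitary_left {V : Matrix (Fin d) (Fin d) ℂ} (hV : V ∈ Matrix.unitaryGroup (Fin d) ℂ)
    (X : Matrix (Fin d) (Fin d) ℂ) : ‖V * X‖ = ‖X‖ := by
  have h1 : Vᴴ * V = 1 := by
    rw [← Matrix.star_eq_conjTranspose]; exact Matrix.mem_unitaryGroup_iff'.mp hV
  rw [frob_norm_eq, frob_norm_eq, frob_sq_eq_trace, frob_sq_eq_trace]
  rw [Matrix.conjTranspose_mul, Matrix.mul_assoc, ← Matrix.mul_assoc Vᴴ V X, h1, Matrix.one_mul]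

lemma frob_unitary_right {V : Matrix (Fin d) (Fin d) ℂ} (hV : V ∈ Matrix.unitaryGroup (Fin d) ℂ)
    (X : Matrix (Fin d) (Fin d) ℂ) : ‖X * V‖ = ‖X‖ := by
  have h1 : V * Vᴴ = 1 := by
    rw [← Matrix.star_eq_conjTranspose]; exact Matrix.mem_unitaryGroup_iff.mp hV
  rw [frob_norm_eq, frob_norm_eq, frob_sq_eq_trace, frob_sq_eq_trace]
  rw [Matrix.conjTranspose_mul, show Vᴴ * Xᴴ * (X * V) = Vᴴ * (Xᴴ * X) * V by
    simp [Matrix.mul_assoc], Matrix.trace_mul_cycle, ← Matrix.mul_assoc, h1, Matrix.one_mul]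

lemma frob_conj_unitary {V : Matrix (Fin d) (Fin d) ℂ} (hV : V ∈ Matrix.unitaryGroup (Fin d) ℂ)
    (X : Matrix (Fin d) (Fin d) ℂ) : ‖V * X * star V‖ = ‖X‖ := by
  rw [frob_unitary_right (Unitary.star_mem hV), frob_unitary_left hV]

/-! ### Sorted spectral decomposition -/

lemma star_perm (π : Equiv.Perm (Fin d)) :
    star (π.toPEquiv.toMatrix : Matrix (Fin d) (Fin d) ℂ) = (π.symm.toPEquiv.toMatrix) := by
  rw [Matrix.star_eq_conjTranspose, Equiv.toPEquiv_symm, PEquiv.toMatrix_symm]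
  ext i j
  simp [Matrix.conjTranspose_apply, PEquiv.toMatrix_apply, apply_ite]

lemma perm_unitary (π : Equiv.Perm (Fin d)) :
    (π.toPEquiv.toMatrix : Matrix (Fin d) (Fin d) ℂ) ∈ Matrix.unitaryGroup (Fin d) ℂ := by
  rw [Matrix.mem_unitaryGroup_iff', star_perm, ← PEquiv.toMatrix_trans, ← Equiv.toPEquiv_trans]
  simp

lemma perm_diag (π : Equiv.Perm (Fin d)) (v : Fin d → ℂ) :
    (π.toPEquiv.toMatrix : Matrix (Fin d) (Fin d) ℂ) * Matrix.diagonal v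
      * star (π.toPEquiv.toMatrix : Matrix (Fin d) (Fin d) ℂ)
      = Matrix.diagonal (v ∘ π) := by
  rw [star_perm, PEquiv.toMatrix_toPEquiv_mul, PEquiv.mul_toMatrix_toPEquiv, Equiv.symm_symm,
    Matrix.submatrix_submatrix, Function.comp_id, Function.id_comp,
    Matrix.submatrix_diagonal_equiv]

/-- Any Hermitian matrix admits a spectral decomposition with antitone eigenvalue vector. -/
lemma exists_antitone_decomp (B : Matrix (Fin d) (Fin d) ℂ) (hB : B.IsHermitian) :
    ∃ (V : Matrix (Fin d) (Fin d) ℂ) (ξ : Fin d → ℝ),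
      V ∈ Matrix.unitaryGroup (Fin d) ℂ ∧ Antitone ξ ∧
      B = V * Matrix.diagonal (fun i => (ξ i : ℂ)) * star V := by
  classical
  have hdec := hB.spectral_theorem
  set W : Matrix (Fin d) (Fin d) ℂ := ↑hB.eigenvectorUnitary with hW
  set ev := hB.eigenvalues with hev
  set σ := Tuple.sort ev with hσ
  set π : Equiv.Perm (Fin d) := Fin.revPerm.trans σ with hπ
  set P : Matrix (Fin d) (Fin d) ℂ := π.toPEquiv.toMatrix with hP
  refine ⟨W * star P, ev ∘ π, ?_, ?_, ?_⟩
  · exact mul_mem hB.eigenvectorUnitary.2 (Unitary.star_mem (perm_unitary π))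
  · intro i j hij
    have : Fin.rev j ≤ Fin.rev i := Fin.rev_le_rev.mpr hij
    exact Tuple.monotone_sort ev this
  · have hd : Matrix.diagonal (fun i => ((ev ∘ π) i : ℂ))
        = P * Matrix.diagonal (RCLike.ofReal ∘ ev) * star P := by
      rw [perm_diag]
      rfl
    rw [hd, Matrix.star_mul, star_star]
    have h1 : star P * P = 1 := Matrix.mem_unitaryGroup_iff'.mp (perm_unitary π)
    calc B = W * Matrix.diagonal (RCLike.ofReal ∘ ev) * star W := hdec
      _ = W * ((star P * P) * Matrix.diagonal (RCLike.ofReal ∘ ev) * (star P * P)) * star W := by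
          rw [h1]; noncomm_ring
      _ = W * star P * (P * Matrix.diagonal (RCLike.ofReal ∘ ev) * star P) * (P * star W) := by
          noncomm_ring

/-! ### Key entrywise-Lipschitz comparison -/

lemma key_lipschitz {V W : Matrix (Fin d) (Fin d) ℂ}
    (hV : V ∈ Matrix.unitaryGroup (Fin d) ℂ) (hW : W ∈ Matrix.unitaryGroup (Fin d) ℂ)
    (ξ θ : Fin d → ℝ) (g : ℝ → ℝ) {L : ℝ} (hL : 0 ≤ L)
    (h : ∀ i j, |g (ξ i) - g (θ j)| ≤ L * |ξ i - θ j|) :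
    ‖V * Matrix.diagonal (fun i => (g (ξ i) : ℂ)) * star V
      - W * Matrix.diagonal (fun i => (g (θ i) : ℂ)) * star W‖
    ≤ L * ‖V * Matrix.diagonal (fun i => (ξ i : ℂ)) * star V
      - W * Matrix.diagonal (fun i => (θ i : ℂ)) * star W‖ := by
  have hVs : star V * V = 1 := Matrix.mem_unitaryGroup_iff'.mp hV
  have conj : ∀ (a b : Fin d → ℂ),
      star V * (V * Matrix.diagonal a * star V - W * Matrix.diagonal b * star W) * W
      = Matrix.diagonal a * (star V * W) - (star V * W) * Matrix.diagonal b := by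
    intro a b
    rw [Matrix.mul_sub, Matrix.sub_mul]
    congr 1
    · calc star V * (V * Matrix.diagonal a * star V) * W
          = (star V * V) * Matrix.diagonal a * (star V * W) := by noncomm_ring
        _ = Matrix.diagonal a * (star V * W) := by rw [hVs, Matrix.one_mul]
    · calc star V * (W * Matrix.diagonal b * star W) * W
          = (star V * W) * Matrix.diagonal b * (star W * W) := by noncomm_ring
        _ = (star V * W) * Matrix.diagonal b := by
            rw [Matrix.mem_unitaryGroup_iff'.mp hW, Matrix.mul_one]
  have norm_eq : ∀ (X : Matrix (Fin d) (Fin d) ℂ), ‖star V * X * W‖ = ‖X‖ := fun X => by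
    rw [frob_unitary_right hW, frob_unitary_left (Unitary.star_mem hV)]
  rw [← norm_eq (V * Matrix.diagonal (fun i => (g (ξ i) : ℂ)) * star V - _),
      ← norm_eq (V * Matrix.diagonal (fun i => ((ξ i) : ℂ)) * star V - _), conj, conj]
  apply frob_le_of_entry_le hL
  intro i j
  have e1 : ∀ (a b : Fin d → ℂ) i j,
      (Matrix.diagonal a * (star V * W) - (star V * W) * Matrix.diagonal b) i j
      = (a i - b j) * (star V * W) i j := by
    intro a b i j
    rw [Matrix.sub_apply, Matrix.diagonal_mul, Matrix.mul_diagonal, sub_mul,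
      mul_comm ((star V * W) i j) (b j)]
  rw [e1, e1]
  rw [norm_mul, norm_mul]
  have : ∀ (x y : ℝ), ‖((x : ℂ) - (y : ℂ))‖ = |x - y| := fun x y => by
    rw [← Complex.ofReal_sub, Complex.norm_real, Real.norm_eq_abs]
  rw [this, this, ← mul_assoc]
  exact mul_le_mul_of_nonneg_right (h i j) (norm_nonneg _)

/-- Eigenvalue bound. -/
lemma eigenvalue_bound {B V : Matrix (Fin d) (Fin d) ℂ} {ξ : Fin d → ℝ}
    (hV : V ∈ Matrix.unitaryGroup (Fin d) ℂ)
    (hdec : B = V * Matrix.diagonal (fun i => (ξ i : ℂ)) * star V) (i : Fin d) :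
    |ξ i| ≤ ‖B‖ := by
  have h1 : star V * B * V = Matrix.diagonal (fun i => (ξ i : ℂ)) := by
    rw [hdec]
    calc star V * (V * Matrix.diagonal (fun i => (ξ i : ℂ)) * star V) * V
        = (star V * V) * Matrix.diagonal (fun i => (ξ i : ℂ)) * (star V * V) := by noncomm_ring
      _ = _ := by rw [Matrix.mem_unitaryGroup_iff'.mp hV]; simp
  have h2 : ‖(Matrix.diagonal (fun i => (ξ i : ℂ))) i i‖ ≤ ‖star V * B * V‖ := by
    rw [h1]; exact entry_le_frob _ i i
  rw [frob_unitary_right hV, frob_unitary_left (Unitary.star_mem hV)] at h2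
  simpa using h2

/-! ### Scalar divided-difference lemmas -/

lemma dd_poly (p : Polynomial ℝ) (x y : ℝ) :
    (if x = y then Polynomial.eval x (Polynomial.derivative p)
      else (Polynomial.eval x p - Polynomial.eval y p) / (x - y))
    = ∑ k ∈ range (p.natDegree + 1), p.coeff k * ∑ i ∈ range k, x ^ i * y ^ (k - 1 - i) := by
  split_ifs with hxy
  · subst hxy
    rw [Polynomial.derivative_eval,
      Polynomial.sum_over_range (p := p) (f := fun n a => a * (n : ℝ) * x ^ (n - 1))
        (fun n => by simp)]
    refine Finset.sum_congr rfl fun k _ => ?_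
    rw [mul_assoc]
    congr 1
    have : ∀ i ∈ range k, x ^ i * x ^ (k - 1 - i) = x ^ (k - 1) := by
      intro i hi
      rw [Finset.mem_range] at hi
      rw [← pow_add]
      congr 1
      omega
    rw [Finset.sum_congr rfl this, Finset.sum_const, card_range, nsmul_eq_mul]
  · have hsub : x - y ≠ 0 := sub_ne_zero.mpr hxy
    rw [div_eq_iff hsub, Finset.sum_mul]
    rw [Polynomial.eval_eq_sum_range, Polynomial.eval_eq_sum_range, ← Finset.sum_sub_distrib]
    refine Finset.sum_congr rfl fun k _ => ?_
    rw [mul_assoc, geom_sum₂_mul, mul_sub]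

lemma divDiff_poly (p : Polynomial ℝ) (α : Fin d → ℝ) (m n : Fin d) :
    divDiff (fun x => Polynomial.eval x p) α m n
    = ∑ k ∈ range (p.natDegree + 1), p.coeff k
        * ∑ i ∈ range k, (α m) ^ i * (α n) ^ (k - 1 - i) := by
  rw [divDiff, ← dd_poly]
  congr 1
  exact Polynomial.deriv p

lemma divDiff_add (f g : ℝ → ℝ) (α : Fin d → ℝ) (m n : Fin d)
    (hf : DifferentiableAt ℝ f (α m)) (hg : DifferentiableAt ℝ g (α m)) :
    divDiff (fun x => f x + g x) α m n = divDiff f α m n + divDiff g α m n := by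
  unfold divDiff
  split_ifs with h
  · rw [deriv_fun_add hf hg]
  · ring

lemma divDiff_bound (g : ℝ → ℝ) (hg : Differentiable ℝ g) (α : Fin d → ℝ)
    {K : Set ℝ} (hK : Convex ℝ K) {C : ℝ}
    (hbound : ∀ x ∈ K, |deriv g x| ≤ C) (hmem : ∀ i, α i ∈ K) (m n : Fin d) :
    |divDiff g α m n| ≤ C := by
  unfold divDiff
  split_ifs with h
  · exact hbound _ (hmem m)
  · rw [abs_div]
    rw [div_le_iff₀ (abs_pos.mpr (sub_ne_zero.mpr h))]
    have := hK.norm_image_sub_le_of_norm_deriv_le (fun x _ => hg.differentiableAt)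
      (fun x hx => hbound x hx) (hmem n) (hmem m)
    simpa [Real.norm_eq_abs, mul_comm] using this

/-! ### polynomial calculus on matrices -/

noncomputable def powDeriv (A : Matrix (Fin d) (Fin d) ℂ) (k : ℕ) :
    Matrix (Fin d) (Fin d) ℂ →L[ℝ] Matrix (Fin d) (Fin d) ℂ :=
  LinearMap.toContinuousLinearMap
    { toFun := fun E => ∑ i ∈ range k, A ^ i * E * A ^ (k - 1 - i)
      map_add' := fun E F => by
        rw [← Finset.sum_add_distrib]
        refine Finset.sum_congr rfl fun i _ => ?_
        rw [Matrix.mul_add, Matrix.add_mul]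
      map_smul' := fun r E => by
        simp only [RingHom.id_apply, Finset.smul_sum, Matrix.mul_smul, Matrix.smul_mul] }

lemma powDeriv_apply (A : Matrix (Fin d) (Fin d) ℂ) (k : ℕ) (E : Matrix (Fin d) (Fin d) ℂ) :
    powDeriv A k E = ∑ i ∈ range k, A ^ i * E * A ^ (k - 1 - i) := rfl

lemma hasFDerivAt_pow'' (A : Matrix (Fin d) (Fin d) ℂ) (k : ℕ) :
    HasFDerivAt (fun B : Matrix (Fin d) (Fin d) ℂ => B ^ k) (powDeriv A k) A := by
  induction k with
  | zero =>
    have : (powDeriv A 0) = 0 := by ext E; simp [powDeriv_apply]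
    rw [this]
    simpa using (hasFDerivAt_const (1 : Matrix (Fin d) (Fin d) ℂ) A).congr_fderiv (by simp)
  | succ k ih =>
    have h := ih.mul' (hasFDerivAt_id A)
    have heq : ((fun B : Matrix (Fin d) (Fin d) ℂ => B ^ k) * id) = fun B => B ^ (k + 1) := by
      funext B; rw [Pi.mul_apply, id, ← pow_succ]
    rw [heq] at h
    have hC : (A ^ k • ContinuousLinearMap.id ℝ (Matrix (Fin d) (Fin d) ℂ)
        + MulOpposite.op (id A) • powDeriv A k) = powDeriv A (k + 1) := by
      refine ContinuousLinearMap.ext fun E => ?_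
      simp only [powDeriv_apply, ContinuousLinearMap.add_apply, ContinuousLinearMap.smul_apply,
        MulOpposite.smul_eq_mul_unop, MulOpposite.unop_op, ContinuousLinearMap.coe_id', id_eq, smul_eq_mul]
      have h1 : ∀ x : ℕ, k + 1 - 1 - x = k - x := fun x => by omega
      simp only [h1]
      rw [Finset.sum_range_succ, Nat.sub_self, pow_zero, Matrix.mul_one, add_comm,
        Finset.sum_mul]
      congr 1
      refine Finset.sum_congr rfl fun i hi => ?_
      rw [Finset.mem_range] at hi
      rw [Matrix.mul_assoc (A ^ i * E) _ A, ← pow_succ]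
      have h2 : k - 1 - i + 1 = k - i := by omega
      rw [h2]
    exact h.congr_fderiv hC

noncomputable def hadamCLM (U : Matrix (Fin d) (Fin d) ℂ) (c : Fin d → Fin d → ℝ) :
    Matrix (Fin d) (Fin d) ℂ →L[ℝ] Matrix (Fin d) (Fin d) ℂ :=
  LinearMap.toContinuousLinearMap
    { toFun := fun E => U * (Matrix.of fun m n => (c m n : ℂ) * (star U * E * U) m n) * star U
      map_add' := fun E F => by
        have h : (Matrix.of fun m n => (c m n : ℂ) * (star U * (E + F) * U) m n)
            = (Matrix.of fun m n => (c m n : ℂ) * (star U * E * U) m n)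
            + (Matrix.of fun m n => (c m n : ℂ) * (star U * F * U) m n) := by
          ext m n
          simp only [Matrix.of_apply, Matrix.add_apply, Matrix.mul_add, Matrix.add_mul, mul_add]
        show U * _ * star U = U * _ * star U + U * _ * star U
        rw [h, Matrix.mul_add, Matrix.add_mul]
      map_smul' := fun r E => by
        have h : (Matrix.of fun m n => (c m n : ℂ) * (star U * (r • E) * U) m n)
            = r • (Matrix.of fun m n => (c m n : ℂ) * (star U * E * U) m n) := by
          ext m n
          simp only [Matrix.of_apply, Matrix.smul_apply, Matrix.mul_smul, Matrix.smul_mul,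
            mul_smul_comm]
        show U * _ * star U = r • (U * _ * star U)
        rw [h, Matrix.mul_smul, Matrix.smul_mul] }

lemma hadamCLM_apply (U : Matrix (Fin d) (Fin d) ℂ) (c : Fin d → Fin d → ℝ)
    (E : Matrix (Fin d) (Fin d) ℂ) :
    hadamCLM U c E = U * (Matrix.of fun m n => (c m n : ℂ) * (star U * E * U) m n) * star U :=
  rfl

lemma hadamCLM_norm_le {U : Matrix (Fin d) (Fin d) ℂ} (hU : U ∈ Matrix.unitaryGroup (Fin d) ℂ)
    (c : Fin d → Fin d → ℝ) {C : ℝ} (hC : 0 ≤ C) (hc : ∀ m n, |c m n| ≤ C)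
    (E : Matrix (Fin d) (Fin d) ℂ) : ‖hadamCLM U c E‖ ≤ C * ‖E‖ := by
  rw [hadamCLM_apply, frob_conj_unitary hU]
  have h2 : ‖star U * E * U‖ = ‖E‖ := by
    rw [frob_unitary_right hU, frob_unitary_left (Unitary.star_mem hU)]
  rw [← h2]
  apply frob_le_of_entry_le hC
  intro i j
  rw [Matrix.of_apply, norm_mul, Complex.norm_real, Real.norm_eq_abs]
  exact mul_le_mul_of_nonneg_right (hc i j) (norm_nonneg _)

lemma conj_pow' {U D : Matrix (Fin d) (Fin d) ℂ} (hU : star U * U = 1) (k : ℕ) :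
    (U * D * star U) ^ k = U * D ^ k * star U := by
  induction k with
  | zero =>
    simp only [pow_zero, Matrix.mul_one]
    exact (Matrix.mem_unitaryGroup_iff.mp (Matrix.mem_unitaryGroup_iff'.mpr hU)).symm
  | succ k ih =>
    rw [pow_succ, pow_succ, ih]
    calc U * D ^ k * star U * (U * D * star U)
        = U * D ^ k * (star U * U) * D * star U := by noncomm_ring
      _ = U * (D ^ k * D) * star U := by rw [hU]; noncomm_ring


lemma diag_smul_sum (s : Finset ℕ) (c : ℕ → ℝ) (v : ℕ → Fin d → ℂ) :
    (∑ k ∈ s, c k • Matrix.diagonal (v k))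
      = Matrix.diagonal (fun i => ∑ k ∈ s, c k • v k i) := by
  ext m n
  rw [Matrix.sum_apply]
  by_cases h : m = n
  · subst h
    simp [Matrix.diagonal_apply_eq]
  · simp [Matrix.diagonal_apply_ne _ h]

lemma conj_smul_sum (U : Matrix (Fin d) (Fin d) ℂ) (s : Finset ℕ) (c : ℕ → ℝ)
    (X : ℕ → Matrix (Fin d) (Fin d) ℂ) :
    (∑ k ∈ s, c k • (U * X k * star U)) = U * (∑ k ∈ s, c k • X k) * star U := by
  rw [Finset.mul_sum, Finset.sum_mul]
  refine Finset.sum_congr rfl fun k _ => ?_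
  rw [Matrix.mul_smul, Matrix.smul_mul]

lemma poly_value_eq {V : Matrix (Fin d) (Fin d) ℂ} (hV : V ∈ Matrix.unitaryGroup (Fin d) ℂ)
    (ξ : Fin d → ℝ) (p : Polynomial ℝ) (B : Matrix (Fin d) (Fin d) ℂ)
    (hBdec : B = V * Matrix.diagonal (fun i => (ξ i : ℂ)) * star V) :
    (∑ k ∈ range (p.natDegree + 1), p.coeff k • B ^ k)
      = V * Matrix.diagonal (fun i => ((Polynomial.eval (ξ i) p : ℝ) : ℂ)) * star V := by
  have hVs : star V * V = 1 := Matrix.mem_unitaryGroup_iff'.mp hV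
  have hpow : ∀ k : ℕ, B ^ k
      = V * Matrix.diagonal ((fun i => (ξ i : ℂ)) ^ k) * star V := by
    intro k
    rw [hBdec, conj_pow' hVs, Matrix.diagonal_pow]
  calc (∑ k ∈ range (p.natDegree + 1), p.coeff k • B ^ k)
      = ∑ k ∈ range (p.natDegree + 1),
          p.coeff k • (V * Matrix.diagonal ((fun i => (ξ i : ℂ)) ^ k) * star V) := by
        refine Finset.sum_congr rfl fun k _ => by rw [hpow]
    _ = V * (∑ k ∈ range (p.natDegree + 1),
          p.coeff k • Matrix.diagonal ((fun i => (ξ i : ℂ)) ^ k)) * star V := by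
        rw [conj_smul_sum]
    _ = _ := by
        rw [diag_smul_sum]
        have hfun : (fun i => ∑ k ∈ range (p.natDegree + 1), p.coeff k • ((fun i => (ξ i : ℂ)) ^ k) i)
            = fun i => ((Polynomial.eval (ξ i) p : ℝ) : ℂ) := by
          funext i
          rw [Polynomial.eval_eq_sum_range]
          push_cast
          refine Finset.sum_congr rfl fun k _ => ?_
          rw [Complex.real_smul]
          simp only [Pi.pow_apply]
        rw [hfun]

lemma poly_deriv_eq {U : Matrix (Fin d) (Fin d) ℂ} (hU : U ∈ Matrix.unitaryGroup (Fin d) ℂ)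
    (α : Fin d → ℝ) (p : Polynomial ℝ)
    (A : Matrix (Fin d) (Fin d) ℂ)
    (hAdec : A = U * Matrix.diagonal (fun i => (α i : ℂ)) * star U)
    (E : Matrix (Fin d) (Fin d) ℂ) :
    (∑ k ∈ range (p.natDegree + 1), p.coeff k • powDeriv A k E)
      = hadamCLM U (divDiff (fun x => Polynomial.eval x p) α) E := by
  have hUs : star U * U = 1 := Matrix.mem_unitaryGroup_iff'.mp hU
  set Eh : Matrix (Fin d) (Fin d) ℂ := star U * E * U with hEh
  have hpow : ∀ k : ℕ, A ^ k = U * Matrix.diagonal ((fun i => (α i : ℂ)) ^ k) * star U := by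
    intro k; rw [hAdec, conj_pow' hUs, Matrix.diagonal_pow]
  have hterm : ∀ i j : ℕ, A ^ i * E * A ^ j
      = U * (Matrix.diagonal ((fun i => (α i : ℂ)) ^ i) * Eh
          * Matrix.diagonal ((fun i => (α i : ℂ)) ^ j)) * star U := by
    intro i j
    rw [hpow, hpow, hEh]
    noncomm_ring
  have hPD : ∀ k, powDeriv A k E = U * (∑ i ∈ range k,
      Matrix.diagonal ((fun i => (α i : ℂ)) ^ i) * Eh
        * Matrix.diagonal ((fun i => (α i : ℂ)) ^ (k - 1 - i))) * star U := by
    intro k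
    rw [powDeriv_apply, Finset.mul_sum, Finset.sum_mul]
    exact Finset.sum_congr rfl fun i _ => by rw [hterm]
  calc (∑ k ∈ range (p.natDegree + 1), p.coeff k • powDeriv A k E)
      = U * (∑ k ∈ range (p.natDegree + 1), p.coeff k • ∑ i ∈ range k,
          Matrix.diagonal ((fun i => (α i : ℂ)) ^ i) * Eh
          * Matrix.diagonal ((fun i => (α i : ℂ)) ^ (k - 1 - i))) * star U := by
        rw [← conj_smul_sum]
        exact Finset.sum_congr rfl fun k _ => by rw [hPD]
    _ = _ := by
        rw [hadamCLM_apply]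
        congr 1
        congr 1
        ext m n
        rw [Matrix.sum_apply, Matrix.of_apply, ← hEh]
        rw [divDiff_poly]
        push_cast
        rw [Finset.sum_mul]
        refine Finset.sum_congr rfl fun k _ => ?_
        rw [Matrix.smul_apply, Matrix.sum_apply, Complex.real_smul, Finset.mul_sum]
        rw [show ((p.coeff k : ℂ) * ∑ x ∈ range k, (α m : ℂ) ^ x * (α n : ℂ) ^ (k - 1 - x))
              * (star U * E * U) m n
            = ∑ x ∈ range k, (p.coeff k : ℂ)
              * ((α m : ℂ) ^ x * (α n : ℂ) ^ (k - 1 - x) * (star U * E * U) m n) by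
          rw [Finset.mul_sum, Finset.sum_mul]
          exact Finset.sum_congr rfl fun x _ => by ring]
        refine Finset.sum_congr rfl fun i _ => ?_
        rw [Matrix.mul_diagonal, Matrix.diagonal_mul]
        simp only [Pi.pow_apply]
        ring

lemma exists_antideriv (q : Polynomial ℝ) :
    ∃ p : Polynomial ℝ, Polynomial.derivative p = q := by
  induction q using Polynomial.induction_on' with
  | add p q hp hq =>
    obtain ⟨P, hP⟩ := hp
    obtain ⟨Q, hQ⟩ := hq
    exact ⟨P + Q, by rw [map_add, hP, hQ]⟩
  | monomial n a =>
    refine ⟨Polynomial.monomial (n + 1) (a / (n + 1)), ?_⟩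
    rw [Polynomial.derivative_monomial]
    have h1 : a / ((n : ℝ) + 1) * ((n : ℕ) + 1 : ℕ) = a := by
      push_cast
      rw [div_mul_cancel₀ _ (by positivity : ((n : ℝ) + 1) ≠ 0)]
    rw [h1]
    simp

end Auxiliary

/-- **Daleskii–Krein theorem.**
Let `f : ℝ → ℝ` be C¹ and let `A = U Λ_α U*` be Hermitian with
non-increasingly ordered eigenvalue vector `α` and unitary `U`.  Then the
scalar matrix function `𝓛_f` (applying `f` to each eigenvalue) is Fréchet
differentiable at `A` (as a map between the real normed spaces of Hermitian
matrices), and for every Hermitian `E`, with `Ê = U* E U`,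
`𝓛_f'(E) = U ([f,α] ∘ Ê) U*` where `∘` is the Hadamard product. -/
theorem daleskii_krein {d : ℕ}
    (f : ℝ → ℝ) (hf : ContDiff ℝ 1 f)
    (A U : Matrix (Fin d) (Fin d) ℂ) (α : Fin d → ℝ)
    (Lf : Matrix (Fin d) (Fin d) ℂ → Matrix (Fin d) (Fin d) ℂ)
    (hA : A.IsHermitian)
    (hU : U ∈ Matrix.unitaryGroup (Fin d) ℂ)
    (hα : Antitone α)
    (hAdec : A = U * Matrix.diagonal (fun i => (α i : ℂ)) * star U)
    -- `Lf` is the scalar matrix function `𝓛_f` determined by spectral decompositions: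
    (hLf : ∀ (B V : Matrix (Fin d) (Fin d) ℂ) (ξ : Fin d → ℝ),
      V ∈ Matrix.unitaryGroup (Fin d) ℂ → Antitone ξ →
      B = V * Matrix.diagonal (fun i => (ξ i : ℂ)) * star V →
      Lf B = V * Matrix.diagonal (fun i => (f (ξ i) : ℂ)) * star V) :
    ∃ L : Matrix (Fin d) (Fin d) ℂ →L[ℝ] Matrix (Fin d) (Fin d) ℂ,
      HasFDerivWithinAt Lf L {B | B.IsHermitian} A ∧
      ∀ E : Matrix (Fin d) (Fin d) ℂ, E.IsHermitian →
        L E = U * (Matrix.of fun m n =>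
            (divDiff f α m n : ℂ) * (star U * E * U) m n) * star U := by
  classical
  have hfdiff : Differentiable ℝ f := hf.differentiable one_ne_zero
  have hfcont : Continuous (deriv f) := hf.continuous_deriv le_rfl
  refine ⟨hadamCLM U (divDiff f α), ?_, fun E _ => hadamCLM_apply U _ E⟩
  refine HasFDerivWithinAt.of_isLittleO ?_
  rw [Asymptotics.isLittleO_iff]
  intro c hc
  -- the compact interval containing all relevant spectra
  set a : ℝ := ‖A‖ + 1 with ha
  have ha0 : (0:ℝ) < a := by positivity
  set K : Set ℝ := Set.Icc (-a) a with hK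
  have hKconv : Convex ℝ K := convex_Icc _ _
  have hαK : ∀ i, α i ∈ K := by
    intro i
    have := eigenvalue_bound hU hAdec i
    rw [hK]
    constructor <;> [linarith [abs_le.mp this |>.1]; linarith [abs_le.mp this |>.2]]
  set ε : ℝ := c / 4 with hε
  have hε0 : 0 < ε := by positivity
  -- polynomial approximation of the derivative
  obtain ⟨q, hq⟩ := exists_polynomial_near_of_continuousOn (-a) a (deriv f)
    hfcont.continuousOn ε hε0
  obtain ⟨p, hp⟩ := exists_antideriv q
  set g : ℝ → ℝ := fun x => f x - Polynomial.eval x p with hg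
  have hpd : Differentiable ℝ fun x : ℝ => Polynomial.eval x p := Polynomial.differentiable p
  have hgdiff : Differentiable ℝ g := hfdiff.sub hpd
  have hgderiv : ∀ x, deriv g x = deriv f x - Polynomial.eval x q := by
    intro x
    rw [hg, deriv_fun_sub (hfdiff.differentiableAt) (hpd.differentiableAt), Polynomial.deriv, hp]
  have hgK : ∀ x ∈ K, |deriv g x| ≤ ε := by
    intro x hx
    rw [hgderiv, abs_sub_comm]
    exact le_of_lt (hq x hx)
  -- split the candidate derivative
  have hdsplit : ∀ m n, divDiff f α m n
      = divDiff (fun x => Polynomial.eval x p) α m n + divDiff g α m n := by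
    intro m n
    have : f = fun x => Polynomial.eval x p + g x := by funext x; rw [hg]; ring
    rw [show divDiff f α m n = divDiff (fun x => Polynomial.eval x p + g x) α m n by rw [← this]]
    exact divDiff_add _ _ α m n (hpd.differentiableAt) (hgdiff.differentiableAt)
  have hadamsplit : ∀ E, hadamCLM U (divDiff f α) E
      = hadamCLM U (divDiff (fun x => Polynomial.eval x p) α) E + hadamCLM U (divDiff g α) E := by
    intro E
    simp only [hadamCLM_apply]
    rw [← Matrix.add_mul, ← Matrix.mul_add]
    congr 2
    ext m n
    rw [Matrix.add_apply, Matrix.of_apply, Matrix.of_apply, Matrix.of_apply, hdsplit]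
    push_cast
    ring
  -- the polynomial part has the right derivative
  set N : ℕ := p.natDegree + 1 with hN
  set FP : Matrix (Fin d) (Fin d) ℂ → Matrix (Fin d) (Fin d) ℂ :=
    fun B => ∑ k ∈ Finset.range N, p.coeff k • B ^ k with hFP
  have hFPderiv : HasFDerivAt FP
      (hadamCLM U (divDiff (fun x => Polynomial.eval x p) α)) A := by
    have h1 : HasFDerivAt FP (∑ k ∈ Finset.range N, p.coeff k • powDeriv A k) A := by
      apply HasFDerivAt.fun_sum
      intro k _
      exact (hasFDerivAt_pow'' A k).const_smul (p.coeff k)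
    have h2 : (∑ k ∈ Finset.range N, p.coeff k • powDeriv A k)
        = hadamCLM U (divDiff (fun x => Polynomial.eval x p) α) := by
      refine ContinuousLinearMap.ext fun E => ?_
      rw [ContinuousLinearMap.sum_apply]
      simp only [ContinuousLinearMap.smul_apply]
      exact poly_deriv_eq hU α p A hAdec E
    rwa [h2] at h1
  have hFPlo := (hFPderiv.hasFDerivWithinAt (s := {B | B.IsHermitian})).isLittleO
  rw [Asymptotics.isLittleO_iff] at hFPlo
  have hFPev := hFPlo hε0
  have hball : ∀ᶠ B in nhdsWithin A {B | B.IsHermitian}, ‖B - A‖ ≤ 1 := by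
    apply Filter.Eventually.filter_mono nhdsWithin_le_nhds
    have : Metric.closedBall A 1 ∈ nhds A := Metric.closedBall_mem_nhds A one_pos
    filter_upwards [this] with B hB
    rw [Metric.mem_closedBall, dist_eq_norm] at hB
    exact hB
  have hmem : ∀ᶠ B in nhdsWithin A {B | B.IsHermitian}, B ∈ {B | Matrix.IsHermitian B} :=
    eventually_mem_nhdsWithin
  filter_upwards [hFPev, hball, hmem] with B h1 h2 hBS
  -- decompose B
  obtain ⟨V, ξ, hV, hξanti, hBdec⟩ := exists_antitone_decomp B hBS
  have hξK : ∀ i, ξ i ∈ K := by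
    intro i
    have hb := eigenvalue_bound hV hBdec i
    have hBnorm : ‖B‖ ≤ ‖A‖ + 1 := by
      calc ‖B‖ = ‖A + (B - A)‖ := by congr 1; abel
        _ ≤ ‖A‖ + ‖B - A‖ := norm_add_le _ _
        _ ≤ ‖A‖ + 1 := by linarith
    rw [hK]
    constructor <;> [linarith [abs_le.mp hb |>.1]; linarith [abs_le.mp hb |>.2]]
  -- the three pieces
  have hLfB := hLf B V ξ hV hξanti hBdec
  have hLfA := hLf A U α hU hα hAdec
  have hFPB : FP B = V * Matrix.diagonal (fun i => ((Polynomial.eval (ξ i) p : ℝ) : ℂ)) * star V :=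
    poly_value_eq hV ξ p B hBdec
  have hFPA : FP A = U * Matrix.diagonal (fun i => ((Polynomial.eval (α i) p : ℝ) : ℂ)) * star U :=
    poly_value_eq hU α p A hAdec
  have hGsplit : ∀ (W : Matrix (Fin d) (Fin d) ℂ) (θ : Fin d → ℝ),
      W * Matrix.diagonal (fun i => (f (θ i) : ℂ)) * star W
      = W * Matrix.diagonal (fun i => ((Polynomial.eval (θ i) p : ℝ) : ℂ)) * star W
        + W * Matrix.diagonal (fun i => (g (θ i) : ℂ)) * star W := by
    intro W θ
    rw [← Matrix.add_mul, ← Matrix.mul_add, Matrix.diagonal_add]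
    congr 2
    funext i
    rw [hg]
    push_cast
    ring
  have hkey : Lf B - Lf A - hadamCLM U (divDiff f α) (B - A)
      = (FP B - FP A - hadamCLM U (divDiff (fun x => Polynomial.eval x p) α) (B - A))
        + ((V * Matrix.diagonal (fun i => (g (ξ i) : ℂ)) * star V)
          - (U * Matrix.diagonal (fun i => (g (α i) : ℂ)) * star U))
        - hadamCLM U (divDiff g α) (B - A) := by
    rw [hLfB, hLfA, hadamsplit, hGsplit V ξ, hGsplit U α, hFPB, hFPA]
    abel
  refine (congrArg norm hkey).trans_le ?_
  -- bound the three pieces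
  have hMVT : ∀ i j, |g (ξ i) - g (α j)| ≤ ε * |ξ i - α j| := by
    intro i j
    have := hKconv.norm_image_sub_le_of_norm_deriv_le
      (fun x _ => hgdiff.differentiableAt) (fun x hx => hgK x hx) (hαK j) (hξK i)
    simpa [Real.norm_eq_abs] using this
  have hbound2 : ‖(V * Matrix.diagonal (fun i => (g (ξ i) : ℂ)) * star V)
      - (U * Matrix.diagonal (fun i => (g (α i) : ℂ)) * star U)‖ ≤ ε * ‖B - A‖ := by
    have := key_lipschitz hV hU ξ α g (le_of_lt hε0) hMVT
    rwa [← hBdec, ← hAdec] at this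
  have hbound3 : ‖hadamCLM U (divDiff g α) (B - A)‖ ≤ ε * ‖B - A‖ := by
    apply hadamCLM_norm_le hU _ (le_of_lt hε0) _ (B - A)
    intro m n
    exact divDiff_bound g hgdiff α hKconv hgK hαK m n
  calc ‖FP B - FP A - hadamCLM U (divDiff (fun x => Polynomial.eval x p) α) (B - A)
        + ((V * Matrix.diagonal (fun i => (g (ξ i) : ℂ)) * star V)
          - (U * Matrix.diagonal (fun i => (g (α i) : ℂ)) * star U))
        - hadamCLM U (divDiff g α) (B - A)‖
      ≤ ‖FP B - FP A - hadamCLM U (divDiff (fun x => Polynomial.eval x p) α) (B - A)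
        + ((V * Matrix.diagonal (fun i => (g (ξ i) : ℂ)) * star V)
          - (U * Matrix.diagonal (fun i => (g (α i) : ℂ)) * star U))‖
        + ‖hadamCLM U (divDiff g α) (B - A)‖ := norm_sub_le _ _
    _ ≤ ‖FP B - FP A - hadamCLM U (divDiff (fun x => Polynomial.eval x p) α) (B - A)‖
        + ‖(V * Matrix.diagonal (fun i => (g (ξ i) : ℂ)) * star V)
          - (U * Matrix.diagonal (fun i => (g (α i) : ℂ)) * star U)‖
        + ‖hadamCLM U (divDiff g α) (B - A)‖ := by
          have := norm_add_le (FP B - FP A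
            - hadamCLM U (divDiff (fun x => Polynomial.eval x p) α) (B - A))
            ((V * Matrix.diagonal (fun i => (g (ξ i) : ℂ)) * star V)
            - (U * Matrix.diagonal (fun i => (g (α i) : ℂ)) * star U))
          linarith
    _ ≤ ε * ‖B - A‖ + ε * ‖B - A‖ + ε * ‖B - A‖ :=
          add_le_add (add_le_add h1 hbound2) hbound3
    _ ≤ c * ‖B - A‖ := by
          rw [hε]
          have h0 : (0:ℝ) ≤ ‖B - A‖ := norm_nonneg _
          nlinarith
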